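/- arXiv:1307.1885 — 6 statements merged into one kernel-verified Lean document; each statement's English description precedes it below -/
import Mathlib

section
/- In the standard model M(F) over a Euclidean field F, two distinct particles (lines of slope less than 1 in F^4) a and a' are parallel if and only if the translated a' intersecting a coincides with a; equivalently, two particles that do not meet and admit two further particles c,d meeting them and each other in 5 distinct points must be parallel lines. -/
/-- Squared Euclidean norm on `F^3`. -/
def nsq {F : Type*} [Field F] [LinearOrder F] [IsStrictOrderedRing F] (v : Fin 3 → F) : F :=
  v 0 ^ 2 + v 1 ^ 2 + v 2 ^ 2

/-- Standard inner product on `F^3`. -/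
def dot3 {F : Type*} [Field F] [LinearOrder F] [IsStrictOrderedRing F] (u v : Fin 3 → F) : F :=
  u 0 * v 0 + u 1 * v 1 + u 2 * v 2

/-- A Euclidean field: an ordered field in which every positive element has a square root. -/
def IsEuclidean (F : Type*) [Field F] [LinearOrder F] [IsStrictOrderedRing F] : Prop :=
  ∀ x : F, 0 < x → ∃ y : F, y ^ 2 = x

/-- A line in `F^4 = F × F^3`. -/
def IsLine {F : Type*} [Field F] [LinearOrder F] [IsStrictOrderedRing F] (L : Set (F × (Fin 3 → F))) : Prop :=
  ∃ p d : F × (Fin 3 → F), d ≠ 0 ∧ L = {x | ∃ s : F, x = p + s • d}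

/-- A particle: a line in `F^4` of slope less than 1 (spatial speed below light speed). -/
def IsParticle {F : Type*} [Field F] [LinearOrder F] [IsStrictOrderedRing F] (L : Set (F × (Fin 3 → F))) : Prop :=
  ∃ p d : F × (Fin 3 → F), d.1 ≠ 0 ∧ nsq d.2 < d.1 ^ 2 ∧
    L = {x | ∃ s : F, x = p + s • d}

/-- Forward light signal from `p` to `q` (degenerate case `p = q` allowed):
the time increases and the spatial distance equals the elapsed time. -/
def Sig {F : Type*} [Field F] [LinearOrder F] [IsStrictOrderedRing F] (p q : F × (Fin 3 → F)) : Prop :=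
  p.1 ≤ q.1 ∧ nsq (q.2 - p.2) = (q.1 - p.1) ^ 2

/-- A vertical line: a line parallel to the time axis. -/
def IsVertical {F : Type*} [Field F] [LinearOrder F] [IsStrictOrderedRing F] (L : Set (F × (Fin 3 → F))) : Prop :=
  ∃ v0 : Fin 3 → F, L = {x | x.2 = v0}

/-- Two subsets of `F^4` are parallel when one is a translate of the other. -/
def LinesParallel {F : Type*} [Field F] [LinearOrder F] [IsStrictOrderedRing F]
    (L L' : Set (F × (Fin 3 → F))) : Prop :=
  ∃ w : F × (Fin 3 → F), L' = (fun x => x + w) '' L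

lemma line_param {F : Type*} [Field F] [LinearOrder F] [IsStrictOrderedRing F] {p d q1 q2 q3 : F × (Fin 3 → F)}
    (hd : d ≠ 0) (h1 : ∃ s : F, q1 = p + s • d) (h2 : ∃ s : F, q2 = p + s • d)
    (h3 : ∃ s : F, q3 = p + s • d) (hne : q1 ≠ q2) :
    ∃ u : F, q3 = q1 + u • (q2 - q1) := by
  obtain ⟨s1, rfl⟩ := h1
  obtain ⟨s2, rfl⟩ := h2
  obtain ⟨s3, rfl⟩ := h3
  have hs : s2 - s1 ≠ 0 := by
    intro h
    apply hne
    have : s2 = s1 := by linarith [sub_eq_zero.mp h]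
    rw [this]
  refine ⟨(s3 - s1) / (s2 - s1), ?_⟩
  match_scalars <;> field_simp <;> ring

/-- if distinct particles `a, a'` do not meet, and there are particles
`c, d` meeting `a`, `a'` and each other in 5 distinct points, then `a` and `a'`
are parallel lines in `F^4`. -/
theorem stmt0 {F : Type*} [Field F] [LinearOrder F] [IsStrictOrderedRing F] (hEu : IsEuclidean F)
    (a a' c d : Set (F × (Fin 3 → F)))
    (ha : IsParticle a) (ha' : IsParticle a') (hc : IsParticle c) (hd : IsParticle d)
    (hne : a ≠ a') (hdisj : a ∩ a' = ∅)
    (p1 p2 p3 p4 p5 : F × (Fin 3 → F))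
    (h1 : p1 ∈ a ∩ c) (h2 : p2 ∈ a' ∩ c) (h3 : p3 ∈ a ∩ d)
    (h4 : p4 ∈ a' ∩ d) (h5 : p5 ∈ c ∩ d)
    (hdist : [p1, p2, p3, p4, p5].Pairwise (· ≠ ·)) :
    LinesParallel a a' := by
  classical
  simp only [List.pairwise_cons, List.mem_cons, List.mem_singleton, List.not_mem_nil,
    List.Pairwise.nil, forall_eq_or_imp, forall_eq] at hdist
  obtain ⟨⟨h12, h13, h14, h15, -⟩, ⟨h23, h24, h25, -⟩, ⟨h34, h35, -⟩, ⟨h45, -⟩, -⟩ := hdist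
  obtain ⟨pa, da, hda1, -, rfl⟩ := ha
  obtain ⟨pa', da', hda1', -, rfl⟩ := ha'
  obtain ⟨pc, dc, hdc1, -, rfl⟩ := hc
  obtain ⟨pd, dd, hdd1, -, rfl⟩ := hd
  have hda0 : da ≠ 0 := fun h => hda1 (by rw [h]; rfl)
  have hda0' : da' ≠ 0 := fun h => hda1' (by rw [h]; rfl)
  have hdc0 : dc ≠ 0 := fun h => hdc1 (by rw [h]; rfl)
  have hdd0 : dd ≠ 0 := fun h => hdd1 (by rw [h]; rfl)
  obtain ⟨s1, hs1⟩ := h1.1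
  obtain ⟨t2, ht2⟩ := h2.1
  obtain ⟨s3, hs3⟩ := h3.1
  obtain ⟨t4, ht4⟩ := h4.1
  -- p5 on line c through p1, p2 and on line d through p3, p4
  obtain ⟨u, hu⟩ := line_param hdc0 h1.2 h2.2 h5.1 h12
  obtain ⟨v, hv⟩ := line_param hdd0 h3.2 h4.2 h5.2 h34
  -- non-meeting in parametric form
  have hnm : ∀ s t : F, pa + s • da ≠ pa' + t • da' := by
    intro s t h
    have : (pa + s • da) ∈ ({x | ∃ s : F, x = pa + s • da} ∩ {x | ∃ s : F, x = pa' + s • da'}) :=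
      ⟨⟨s, rfl⟩, ⟨t, h⟩⟩
    rw [hdisj] at this
    exact this
  -- key equation
  have key : (u - v) • (pa' - pa)
      = (s3 - s1 + u * s1 - v * s3) • da + (v * t4 - u * t2) • da' := by
    have h := hu.symm.trans hv
    rw [hs1, ht2, hs3, ht4] at h
    linear_combination (norm := module) h
  -- the directions are parallel
  have hpar : ∃ l : F, da' = l • da := by
    by_contra hcon
    push_neg at hcon
    by_cases huv : u = v
    · subst huv
      have key0 : ((1 - u) * (s3 - s1)) • da + (u * (t4 - t2)) • da' = 0 := by
        linear_combination (norm := module) -key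
      have hB : u * (t4 - t2) = 0 := by
        by_contra hB
        have hB1 : (u * (t4 - t2)) • da' = (-((1 - u) * (s3 - s1))) • da := by
          linear_combination (norm := module) key0
        have : da' = ((u * (t4 - t2))⁻¹ * (-((1 - u) * (s3 - s1)))) • da := by
          rw [← smul_smul, ← hB1, inv_smul_smul₀ hB]
        exact hcon _ this
      rw [hB, zero_smul, add_zero] at key0
      have hA : (1 - u) * (s3 - s1) = 0 := by
        rcases smul_eq_zero.mp key0 with h | h
        · exact h
        · exact absurd h hda0
      have hu0 : u ≠ 0 := by
        intro h
        apply h15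
        rw [hu, h, zero_smul, add_zero]
      have hu1 : u ≠ 1 := by
        intro h
        apply h25
        rw [hu, h, one_smul]
        abel
      have ht : t4 = t2 := by
        have := (mul_eq_zero.mp hB).resolve_left hu0
        linarith
      exact h24 (by rw [ht2, ht4, ht])
    · -- u ≠ v : the lines a, a' meet, contradiction
      have huv' : u - v ≠ 0 := sub_ne_zero.mpr huv
      set α := (u - v)⁻¹ * (s3 - s1 + u * s1 - v * s3) with hα
      set β := (u - v)⁻¹ * (v * t4 - u * t2) with hβ
      have hE : pa' - pa = α • da + β • da' := by
        have h2 := congrArg (fun z => (u - v)⁻¹ • z) key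
        simpa [smul_add, smul_smul, inv_smul_smul₀ huv'] using h2
      apply hnm α (-β)
      have hpa' : pa' = pa + (α • da + β • da') := by rw [← hE]; abel
      rw [hpa']
      module
  obtain ⟨l, hl⟩ := hpar
  have hl0 : l ≠ 0 := by
    intro h
    rw [h, zero_smul] at hl
    exact hda0' hl
  refine ⟨pa' - pa, ?_⟩
  ext x
  constructor
  · rintro ⟨t, rfl⟩
    exact ⟨pa + (t * l) • da, ⟨t * l, rfl⟩, by rw [hl]; module⟩
  · rintro ⟨y, ⟨s, rfl⟩, rfl⟩
    refine ⟨s / l, ?_⟩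
    rw [hl, smul_smul, div_mul_cancel₀ _ hl0]
    module
end

section
/- In F^4 over a Euclidean field F, two events e, e' are simultaneous with respect to the time axis (in the sense of radar simultaneity: there exists a vertical line a' from which light signals emitted at a common point reach e and e' and the reflected signals return to a' at a common point) if and only if e and e' have the same time coordinate. -/
/-- Radar simultaneity w.r.t. vertical observers. -/
def Simul {F : Type*} [Field F] [LinearOrder F] [IsStrictOrderedRing F] (e e' : F × (Fin 3 → F)) : Prop :=
  ∃ L : Set (F × (Fin 3 → F)), IsVertical L ∧
    ∃ e1 ∈ L, ∃ e2 ∈ L, Sig e1 e ∧ Sig e1 e' ∧ Sig e e2 ∧ Sig e' e2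


lemma nsq_nonneg {F : Type*} [Field F] [LinearOrder F] [IsStrictOrderedRing F] (v : Fin 3 → F) : 0 ≤ nsq v := by
  unfold nsq; positivity

lemma nsq_neg {F : Type*} [Field F] [LinearOrder F] [IsStrictOrderedRing F] (v : Fin 3 → F) : nsq (-v) = nsq v := by
  simp [nsq]

lemma mid_time {F : Type*} [Field F] [LinearOrder F] [IsStrictOrderedRing F] {v0 : Fin 3 → F} {e e1 e2 : F × (Fin 3 → F)}
    (h1 : e1.2 = v0) (h2 : e2.2 = v0) (s1 : Sig e1 e) (s2 : Sig e e2) :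
    2 * e.1 = e1.1 + e2.1 := by
  obtain ⟨le1, eq1⟩ := s1
  obtain ⟨le2, eq2⟩ := s2
  rw [h1] at eq1
  rw [h2] at eq2
  have : nsq (v0 - e.2) = nsq (e.2 - v0) := by
    rw [← nsq_neg (e.2 - v0)]; congr 1; abel
  rw [this, eq1] at eq2
  nlinarith [eq2, le1, le2, sq_nonneg (e1.1 + e2.1 - 2 * e.1)]

/-- two events are radar-simultaneous w.r.t. a vertical observer
iff they have the same time coordinate. -/
theorem stmt2 {F : Type*} [Field F] [LinearOrder F] [IsStrictOrderedRing F] (hEu : IsEuclidean F)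
    (e e' : F × (Fin 3 → F)) :
    Simul e e' ↔ e.1 = e'.1 := by
  constructor
  · rintro ⟨L, ⟨v0, rfl⟩, e1, h1, e2, h2, s1, s1', s2, s2'⟩
    have he := mid_time h1 h2 s1 s2
    have he' := mid_time h1 h2 s1' s2'
    linarith
  · intro ht
    set v0 : Fin 3 → F := (2:F)⁻¹ • (e.2 + e'.2) with hv0
    have hns : nsq (e'.2 - v0) = nsq (e.2 - v0) := by
      rw [← nsq_neg (e.2 - v0)]; congr 1
      funext i
      simp only [hv0, Pi.sub_apply, Pi.smul_apply, Pi.add_apply, Pi.neg_apply, smul_eq_mul]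
      ring
    obtain ⟨r, hr0, hr⟩ : ∃ r : F, 0 ≤ r ∧ r ^ 2 = nsq (e.2 - v0) := by
      rcases lt_or_eq_of_le (nsq_nonneg (e.2 - v0)) with h | h
      · obtain ⟨y, hy⟩ := hEu _ h
        exact ⟨|y|, abs_nonneg y, by rw [sq_abs, hy]⟩
      · exact ⟨0, le_refl 0, by rw [← h]; ring⟩
    refine ⟨{x | x.2 = v0}, ⟨v0, rfl⟩, (e.1 - r, v0), rfl, (e.1 + r, v0), rfl, ?_, ?_, ?_, ?_⟩
    · exact ⟨by simp; linarith, by simpa using hr.symm.trans (by ring)⟩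
    · refine ⟨by simp [← ht]; linarith, ?_⟩
      simp only
      rw [hns, ← hr, ← ht]; ring
    · refine ⟨by simp; linarith, ?_⟩
      simp only
      rw [show v0 - e.2 = -(e.2 - v0) by abel, nsq_neg, ← hr]; ring
    · refine ⟨by simp [← ht]; linarith, ?_⟩
      simp only
      rw [show v0 - e'.2 = -(e'.2 - v0) by abel, nsq_neg, hns, ← hr, ← ht]; ring
end

section
/- In F^4, if e1, e2, e3, e4 lie on the time axis and there exist a vertical line a' and events f, f' on a' with forward light signals from e1 to f, f to e3, e2 to f', and f' to e4, then the time elapsed between e1 and e2 equals that between e3 and e4: (e2)_t - (e1)_t = (e4)_t - (e3)_t. -/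
/-- if `e1,…,e4` lie on the time axis and a vertical reflector `a'`
carries events `f, f'` with forward light signals `e1 → f → e3` and `e2 → f' → e4`,
then the elapsed times agree: `t2 - t1 = t4 - t3`. -/
theorem stmt6 {F : Type*} [Field F] [LinearOrder F] [IsStrictOrderedRing F] (hEu : IsEuclidean F)
    (t1 t2 t3 t4 : F) (L : Set (F × (Fin 3 → F))) (hL : IsVertical L)
    (f f' : F × (Fin 3 → F)) (hf : f ∈ L) (hf' : f' ∈ L)
    (h1 : Sig ((t1, 0) : F × (Fin 3 → F)) f)
    (h2 : Sig f ((t3, 0) : F × (Fin 3 → F)))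
    (h3 : Sig ((t2, 0) : F × (Fin 3 → F)) f')
    (h4 : Sig f' ((t4, 0) : F × (Fin 3 → F))) :
    t2 - t1 = t4 - t3 := by
  obtain ⟨v0, hv0⟩ := hL
  rw [hv0] at hf hf'
  simp only [Set.mem_setOf_eq] at hf hf'
  obtain ⟨ha1, ha2⟩ := h1
  obtain ⟨hb1, hb2⟩ := h2
  obtain ⟨hc1, hc2⟩ := h3
  obtain ⟨hd1, hd2⟩ := h4
  simp only [Sig, nsq, Pi.sub_apply, Pi.zero_apply, hf, hf', zero_sub, sub_zero,
    neg_sq, sub_neg_eq_add, zero_add] at ha1 ha2 hb1 hb2 hc1 hc2 hd1 hd2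
  have e1 : f.1 - t1 = t3 - f.1 := by
    have h := mul_eq_zero.mp (by linear_combination hb2 - ha2 :
      ((f.1 - t1) - (t3 - f.1)) * ((f.1 - t1) + (t3 - f.1)) = 0)
    rcases h with h | h <;> linarith
  have e2 : f'.1 - t2 = t4 - f'.1 := by
    have h := mul_eq_zero.mp (by linear_combination hd2 - hc2 :
      ((f'.1 - t2) - (t4 - f'.1)) * ((f'.1 - t2) + (t4 - f'.1)) = 0)
    rcases h with h | h <;> linarith
  have e3 : f.1 - t1 = f'.1 - t2 := by
    have h := mul_eq_zero.mp (by linear_combination hc2 - ha2 :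
      ((f.1 - t1) - (f'.1 - t2)) * ((f.1 - t1) + (f'.1 - t2)) = 0)
    rcases h with h | h <;> linarith
  linarith
end

section
/- Conversely to time-equidistance: if e1, e2, e3, e4 lie on the time axis with (e2)_t - (e1)_t = (e4)_t - (e3)_t and (e3)_t > (e1)_t, then there exist a vertical line a' and events f, f' on a' realizing the signalling configuration (forward light signals from e1 to f, f to e3, e2 to f', f' to e4). -/
/-- converse of time-equidistance: if `e1,…,e4` lie on the time axis,
`t2 - t1 = t4 - t3` and `t3 > t1`, then the radar configuration witnessing
time-equidistance exists. -/
theorem stmt7 {F : Type*} [Field F] [LinearOrder F] [IsStrictOrderedRing F] (hEu : IsEuclidean F)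
    (t1 t2 t3 t4 : F) (heq : t2 - t1 = t4 - t3) (hlt : t1 < t3) :
    ∃ L : Set (F × (Fin 3 → F)), IsVertical L ∧
      ∃ f ∈ L, ∃ f' ∈ L,
        Sig ((t1, 0) : F × (Fin 3 → F)) f ∧
        Sig f ((t3, 0) : F × (Fin 3 → F)) ∧
        Sig ((t2, 0) : F × (Fin 3 → F)) f' ∧
        Sig f' ((t4, 0) : F × (Fin 3 → F)) := by
  set r : F := (t3 - t1) / 2 with hr
  have hrpos : 0 < r := by simp [hr]; linarith
  set v0 : Fin 3 → F := ![r, 0, 0] with hv0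
  have hnsq : ∀ w : Fin 3 → F, nsq (v0 - w) = (r - w 0) ^ 2 + (w 1) ^ 2 + (w 2) ^ 2 := by
    intro w; simp [nsq, hv0, Matrix.cons_val_zero, Matrix.cons_val_one]
  have hnsq2 : nsq (v0 - (0 : Fin 3 → F)) = r ^ 2 := by
    rw [hnsq]; simp
  have hnsq3 : nsq ((0 : Fin 3 → F) - v0) = r ^ 2 := by
    have : (0 : Fin 3 → F) - v0 = -(v0 - 0) := by ring
    rw [this]
    have : nsq (-(v0 - 0)) = nsq (v0 - 0) := by simp [nsq]
    rw [this, hnsq2]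
  refine ⟨{x | x.2 = v0}, ⟨v0, rfl⟩, ((t1 + t3)/2, v0), rfl, ((t2 + t4)/2, v0), rfl, ?_, ?_, ?_, ?_⟩
  · exact ⟨by dsimp; linarith, by dsimp; rw [hnsq2, hr]; ring_nf⟩
  · exact ⟨by dsimp; linarith, by dsimp; rw [hnsq3, hr]; ring_nf⟩
  · refine ⟨by dsimp; linarith, by dsimp; rw [hnsq2, hr]; linear_combination ((t3 - t1 + t4 - t2)/4) * heq⟩
  · refine ⟨by dsimp; linarith, by dsimp; rw [hnsq3, hr]; linear_combination ((t3 - t1 + t4 - t2)/4) * heq⟩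
end

section
/- The collinearity of three locations can be detected by light signals: three vertical lines a1, a2, a3 in F^4 have collinear spatial projections if and only if there exist light signals σ1, σ2, σ3 and events e1 on a1, e2 on a2, e3 on a3 such that (after a suitable permutation i,j,k of 1,2,3) σ1 goes from e_i to e_j, σ2 from e_j to e_k, and σ3 from e_i to e_k. -/
section Aux
variable {F : Type*} [Field F] [LinearOrder F] [IsStrictOrderedRing F]

lemma nsq_smul (s : F) (d : Fin 3 → F) : nsq (s • d) = s ^ 2 * nsq d := by
  simp only [nsq, Pi.smul_apply, smul_eq_mul]; ring

lemma nsq_nonneg_s8 (d : Fin 3 → F) : 0 ≤ nsq d := by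
  unfold nsq; positivity

lemma sig_aux (d w : Fin 3 → F) (c0 c1 m : F)
    (hle : c0 ≤ c1) (hm : 0 ≤ m) (hm2 : m ^ 2 = nsq d) :
    Sig (c0 * m, c0 • d + w) (c1 * m, c1 • d + w) := by
  refine ⟨mul_le_mul_of_nonneg_right hle hm, ?_⟩
  have h : (c1 • d + w) - (c0 • d + w) = (c1 - c0) • d := by module
  rw [h, nsq_smul, ← hm2]; ring

lemma collinear_of_sig (u v : Fin 3 → F) (a b : F)
    (ha : 0 ≤ a) (hb : 0 ≤ b) (hu : nsq u = a ^ 2) (hv : nsq v = b ^ 2)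
    (huv : nsq (u + v) = (a + b) ^ 2) :
    ∃ (d : Fin 3 → F) (r s : F), u = r • d ∧ u + v = s • d := by
  have hdot : dot3 u v = a * b := by
    have expand : nsq (u + v) = nsq u + 2 * dot3 u v + nsq v := by
      simp only [nsq, dot3, Pi.add_apply]; ring
    rw [huv, hu, hv] at expand
    linarith [expand, sq_nonneg (a + b), add_sq a b]
  have lag0 : (u 0 * v 1 - u 1 * v 0) ^ 2 + (u 0 * v 2 - u 2 * v 0) ^ 2
      + (u 1 * v 2 - u 2 * v 1) ^ 2 = 0 := by
    have lag : (u 0 * v 1 - u 1 * v 0) ^ 2 + (u 0 * v 2 - u 2 * v 0) ^ 2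
        + (u 1 * v 2 - u 2 * v 1) ^ 2 = nsq u * nsq v - dot3 u v ^ 2 := by
      simp only [nsq, dot3]; ring
    rw [lag, hu, hv, hdot]; ring
  have sq0 : ∀ x : F, x ^ 2 = 0 → x = 0 := fun x hx => by
    have := sq_eq_zero_iff.mp hx; exact this
  have h01 : u 0 * v 1 = u 1 * v 0 := by
    have : (u 0 * v 1 - u 1 * v 0) ^ 2 = 0 := le_antisymm
      (by linarith [sq_nonneg (u 0 * v 2 - u 2 * v 0), sq_nonneg (u 1 * v 2 - u 2 * v 1)])
      (sq_nonneg _)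
    linarith [sq0 _ this]
  have h02 : u 0 * v 2 = u 2 * v 0 := by
    have : (u 0 * v 2 - u 2 * v 0) ^ 2 = 0 := le_antisymm
      (by linarith [sq_nonneg (u 0 * v 1 - u 1 * v 0), sq_nonneg (u 1 * v 2 - u 2 * v 1)])
      (sq_nonneg _)
    linarith [sq0 _ this]
  have h12 : u 1 * v 2 = u 2 * v 1 := by
    have : (u 1 * v 2 - u 2 * v 1) ^ 2 = 0 := le_antisymm
      (by linarith [sq_nonneg (u 0 * v 1 - u 1 * v 0), sq_nonneg (u 0 * v 2 - u 2 * v 0)])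
      (sq_nonneg _)
    linarith [sq0 _ this]
  have key : ∀ i j : Fin 3, u i * v j = u j * v i := by
    intro i j
    fin_cases i <;> fin_cases j <;>
      first | rfl | exact h01 | exact h01.symm | exact h02 | exact h02.symm | exact h12 | exact h12.symm
  by_cases hu0 : u = 0
  · exact ⟨v, 0, 1, by simp [hu0], by simp [hu0]⟩
  · have : ∃ c : Fin 3, u c ≠ 0 := by
      by_contra h; push_neg at h; exact hu0 (funext h)
    obtain ⟨c, hc⟩ := this
    refine ⟨u, 1, 1 + v c / u c, (one_smul _ _).symm, ?_⟩
    funext i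
    simp only [Pi.add_apply, Pi.smul_apply, smul_eq_mul]
    have hvi : v i = v c / u c * u i := by
      rw [div_mul_eq_mul_div, eq_div_iff hc]
      linear_combination key c i
    rw [hvi]; ring
end Aux

/-- three distinct locations (vertical lines at spatial positions
`v1, v2, v3`) are collinear in `F^3` iff, after a suitable permutation, there are
events on them connected by forward light signals `e_i → e_j`, `e_j → e_k`, `e_i → e_k`. -/
theorem stmt8 {F : Type*} [Field F] [LinearOrder F] [IsStrictOrderedRing F] (hEu : IsEuclidean F)
    (v1 v2 v3 : Fin 3 → F) (h12 : v1 ≠ v2) (h13 : v1 ≠ v3) (h23 : v2 ≠ v3) :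
    Collinear F ({v1, v2, v3} : Set (Fin 3 → F)) ↔
      ∃ σ : Equiv.Perm (Fin 3), ∃ t : Fin 3 → F,
        Sig ((t (σ 0), ![v1, v2, v3] (σ 0)) : F × (Fin 3 → F))
            ((t (σ 1), ![v1, v2, v3] (σ 1)) : F × (Fin 3 → F)) ∧
        Sig ((t (σ 1), ![v1, v2, v3] (σ 1)) : F × (Fin 3 → F))
            ((t (σ 2), ![v1, v2, v3] (σ 2)) : F × (Fin 3 → F)) ∧
        Sig ((t (σ 0), ![v1, v2, v3] (σ 0)) : F × (Fin 3 → F))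
            ((t (σ 2), ![v1, v2, v3] (σ 2)) : F × (Fin 3 → F)) := by
  constructor
  · intro hcol
    rw [collinear_iff_of_mem (Set.mem_insert v1 _)] at hcol
    obtain ⟨d, hd⟩ := hcol
    obtain ⟨r1, hr1⟩ := hd v1 (by simp)
    obtain ⟨r2, hr2⟩ := hd v2 (by simp)
    obtain ⟨r3, hr3⟩ := hd v3 (by simp)
    set c : Fin 3 → F := ![r1, r2, r3] with hc
    obtain ⟨m, hm0, hm2⟩ : ∃ m : F, 0 ≤ m ∧ m ^ 2 = nsq d := by
      rcases eq_or_lt_of_le (nsq_nonneg_s8 d) with h | h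
      · exact ⟨0, le_rfl, by rw [← h]; ring⟩
      · obtain ⟨y, hy⟩ := hEu _ h
        exact ⟨|y|, abs_nonneg y, by rw [sq_abs]; exact hy⟩
    set σ : Equiv.Perm (Fin 3) := Tuple.sort c with hσ
    have hmono := Tuple.monotone_sort c
    have hfc : ∀ i : Fin 3, ![v1, v2, v3] i = c i • d + v1 := by
      intro i; fin_cases i
      · simpa [hc] using hr1
      · simpa [hc] using hr2
      · simpa [hc] using hr3
    have e : ∀ l : Fin 3, ((fun i => c i * m) l, ![v1, v2, v3] l)
        = ((c l * m, c l • d + v1) : F × (Fin 3 → F)) := fun l => by rw [hfc l]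
    have h01 : c (σ 0) ≤ c (σ 1) := hmono (show (0 : Fin 3) ≤ 1 by decide)
    have h12' : c (σ 1) ≤ c (σ 2) := hmono (show (1 : Fin 3) ≤ 2 by decide)
    have h02 : c (σ 0) ≤ c (σ 2) := le_trans h01 h12'
    refine ⟨σ, fun i => c i * m, ?_, ?_, ?_⟩
    · rw [e (σ 0), e (σ 1)]; exact sig_aux d v1 _ _ m h01 hm0 hm2
    · rw [e (σ 1), e (σ 2)]; exact sig_aux d v1 _ _ m h12' hm0 hm2
    · rw [e (σ 0), e (σ 2)]; exact sig_aux d v1 _ _ m h02 hm0 hm2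
  · rintro ⟨σ, t, ⟨hle1, hn1⟩, ⟨hle2, hn2⟩, ⟨hle3, hn3⟩⟩
    set f : Fin 3 → Fin 3 → F := ![v1, v2, v3] with hf
    set u : Fin 3 → F := f (σ 1) - f (σ 0) with huu
    set v : Fin 3 → F := f (σ 2) - f (σ 1) with hvv
    have hsum : u + v = f (σ 2) - f (σ 0) := by rw [huu, hvv]; abel
    have ha : 0 ≤ t (σ 1) - t (σ 0) := by simp only [sub_nonneg]; exact hle1
    have hb : 0 ≤ t (σ 2) - t (σ 1) := by simp only [sub_nonneg]; exact hle2
    obtain ⟨d, r, s, hur, hus⟩ :=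
      collinear_of_sig u v (t (σ 1) - t (σ 0)) (t (σ 2) - t (σ 1)) ha hb hn1 hn2
        (by rw [hsum, hn3]; ring)
    have hf0mem : f (σ 0) ∈ ({v1, v2, v3} : Set (Fin 3 → F)) := by
      have hall : ∀ i : Fin 3, f i ∈ ({v1, v2, v3} : Set (Fin 3 → F)) := by
        intro i; fin_cases i <;> simp [hf]
      exact hall (σ 0)
    rw [collinear_iff_of_mem hf0mem]
    refine ⟨d, ?_⟩
    have hall : ∀ i : Fin 3, ∃ rr : F, f (σ i) = rr • d + f (σ 0) := by
      intro i; fin_cases i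
      · exact ⟨0, by simp⟩
      · exact ⟨r, by rw [← hur, huu]; abel⟩
      · exact ⟨s, by rw [← hus, hsum]; abel⟩
    intro p hp
    have hex : ∃ i : Fin 3, f i = p := by
      rcases hp with h | h | h
      · exact ⟨0, by simp [hf, h]⟩
      · exact ⟨1, by simp [hf, h]⟩
      · exact ⟨2, by simp [hf, Set.mem_singleton_iff.mp h]⟩
    obtain ⟨i, hi⟩ := hex
    obtain ⟨rr, hrr⟩ := hall (σ.symm i)
    rw [Equiv.apply_symm_apply] at hrr
    exact ⟨rr, by rw [← hi, hrr]; simp⟩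
end

section
/- The Affine Desargues configuration used in the motionlessness experiment is sound in F^4: suppose three 'ball' lines b1, b2, b3 emanate from a common event ε, and an observer's line a intersects them so that the light-signal reflection configuration holds (signal from a∩b1 to a point on b2, reflected back arriving at a at a∩b3). If another line a' also satisfies the same reflection configuration with the same balls, and a, a' are coplanar with appropriate lines, then a' is parallel to a. Prove the planar special case in F^2 (1 time + 1 space dimension): if the configuration of light signals (slope ±1 lines) from the intersection events holds for both a and a', then a' is parallel to a. -/
/-- A particle line in `F^2` (coordinates `(t, x)`): a line of slope `|dx/dt| < 1`. -/
def IsParticle2 {F : Type*} [Field F] [LinearOrder F] [IsStrictOrderedRing F] (L : Set (F × F)) : Prop :=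
  ∃ p d : F × F, d.1 ≠ 0 ∧ d.2 ^ 2 < d.1 ^ 2 ∧ L = {x | ∃ s : F, x = p + s • d}

/-- Parallel subsets of `F^2`: one is a translate of the other. -/
def Par2 {F : Type*} [Field F] [LinearOrder F] [IsStrictOrderedRing F] (L L' : Set (F × F)) : Prop :=
  ∃ w : F × F, L' = (fun x => x + w) '' L

lemma particle_through {F : Type*} [Field F] [LinearOrder F] [IsStrictOrderedRing F] {L : Set (F × F)}
    (h : IsParticle2 L) {e : F × F} (he : e ∈ L) :
    ∃ v : F, v ^ 2 < 1 ∧ L = {x : F × F | x.2 - e.2 = v * (x.1 - e.1)} := by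
  obtain ⟨p, d, hd1, hd2, rfl⟩ := h
  obtain ⟨s0, hs0⟩ := he
  have hd1sq : (0:F) < d.1 ^ 2 := (sq_nonneg d.1).lt_of_ne' (pow_ne_zero 2 hd1)
  have h1 : e.1 = p.1 + s0 * d.1 := by rw [hs0]; simp [smul_eq_mul]
  have h2 : e.2 = p.2 + s0 * d.2 := by rw [hs0]; simp [smul_eq_mul]
  refine ⟨d.2 / d.1, ?_, ?_⟩
  · rw [div_pow, div_lt_one hd1sq]; exact hd2
  · ext x
    simp only [Set.mem_setOf_eq]
    constructor
    · rintro ⟨t, rfl⟩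
      simp only [Prod.fst_add, Prod.snd_add, Prod.smul_fst, Prod.smul_snd, smul_eq_mul]
      field_simp
      linear_combination d.2 * h1 - d.1 * h2
    · intro hx
      refine ⟨s0 + (x.1 - e.1) / d.1, ?_⟩
      apply Prod.ext
      · simp only [Prod.fst_add, Prod.smul_fst, smul_eq_mul]
        rw [add_mul, div_mul_cancel₀ _ hd1]
        linarith [h1]
      · simp only [Prod.snd_add, Prod.smul_snd, smul_eq_mul]
        rw [add_mul]
        have hA : (x.1 - e.1) / d.1 * d.2 = d.2 / d.1 * (x.1 - e.1) := by ring
        linarith [h2, hx, hA]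


/-- planar Affine Desargues configuration of the motionlessness
experiment: three particle lines `b1, b2, b3` through a common event `ε` with distinct
velocities; a particle line `a` not through `ε` meets `b1` at `p1`, `b3` at `p3`, and a
point `q` on `b2` is joined to `p1` by a light line of slope `s = ±1` and to `p3` by the
reflected light line of slope `-s`. If `a'` satisfies the same configuration (with the
same slopes), then `a'` is parallel to `a`. -/
theorem stmt17 {F : Type*} [Field F] [LinearOrder F] [IsStrictOrderedRing F] (hEu : IsEuclidean F)
    (b1 b2 b3 a a' : Set (F × F))
    (hb1 : IsParticle2 b1) (hb2 : IsParticle2 b2) (hb3 : IsParticle2 b3)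
    (ha : IsParticle2 a) (ha' : IsParticle2 a')
    (eps : F × F) (he1 : eps ∈ b1) (he2 : eps ∈ b2) (he3 : eps ∈ b3)
    (h12 : b1 ≠ b2) (h13 : b1 ≠ b3) (h23 : b2 ≠ b3)
    (hea : eps ∉ a) (hea' : eps ∉ a')
    (s : F) (hs : s = 1 ∨ s = -1)
    (p1 p3 q : F × F)
    (hp1 : p1 ∈ a ∩ b1) (hp3 : p3 ∈ a ∩ b3) (hq : q ∈ b2)
    (hseg1 : q.2 - p1.2 = s * (q.1 - p1.1))
    (hseg2 : p3.2 - q.2 = -s * (p3.1 - q.1))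
    (p1' p3' q' : F × F)
    (hp1' : p1' ∈ a' ∩ b1) (hp3' : p3' ∈ a' ∩ b3) (hq' : q' ∈ b2)
    (hseg1' : q'.2 - p1'.2 = s * (q'.1 - p1'.1))
    (hseg2' : p3'.2 - q'.2 = -s * (p3'.1 - q'.1)) :
    Par2 a a' := by
  obtain ⟨v1, hv1, hb1e⟩ := particle_through hb1 he1
  obtain ⟨v2, hv2, hb2e⟩ := particle_through hb2 he2
  obtain ⟨v3, hv3, hb3e⟩ := particle_through hb3 he3
  obtain ⟨va, hvav, hae⟩ := particle_through ha hp1.1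
  obtain ⟨va', hvav', ha'e⟩ := particle_through ha' hp1'.1
  -- membership equations
  have m1 : p1.2 - eps.2 = v1 * (p1.1 - eps.1) := by
    have := hp1.2; rw [hb1e] at this; exact this
  have m3 : p3.2 - eps.2 = v3 * (p3.1 - eps.1) := by
    have := hp3.2; rw [hb3e] at this; exact this
  have mq : q.2 - eps.2 = v2 * (q.1 - eps.1) := by
    have := hq; rw [hb2e] at this; exact this
  have m1' : p1'.2 - eps.2 = v1 * (p1'.1 - eps.1) := by
    have := hp1'.2; rw [hb1e] at this; exact this
  have m3' : p3'.2 - eps.2 = v3 * (p3'.1 - eps.1) := by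
    have := hp3'.2; rw [hb3e] at this; exact this
  have mq' : q'.2 - eps.2 = v2 * (q'.1 - eps.1) := by
    have := hq'; rw [hb2e] at this; exact this
  have mA : p3.2 - p1.2 = va * (p3.1 - p1.1) := by
    have := hp3.1; rw [hae] at this; exact this
  have mA' : p3'.2 - p1'.2 = va' * (p3'.1 - p1'.1) := by
    have := hp3'.1; rw [ha'e] at this; exact this
  have hs2 : s ^ 2 = 1 := by rcases hs with h | h <;> rw [h] <;> norm_num
  -- s ≠ ±v for particle velocities
  have hne : ∀ v : F, v ^ 2 < 1 → v - s ≠ 0 ∧ v + s ≠ 0 := by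
    intro v hv
    constructor
    · intro h
      have hv' : v = s := by linarith
      rw [hv'] at hv; linarith
    · intro h
      have hv' : v = -s := by linarith
      rw [hv'] at hv
      have : (-s) ^ 2 = s ^ 2 := by ring
      linarith [this.symm ▸ hv]
  have hv13 : v1 ≠ v3 := by
    intro h; exact h13 (by rw [hb1e, hb3e, h])
  have hT1 : p1.1 - eps.1 ≠ 0 := by
    intro h
    apply hea
    have h2 : p1.2 - eps.2 = 0 := by rw [m1, h]; ring
    have : eps = p1 := Prod.ext (by linarith) (by linarith)
    rw [this]; exact hp1.1
  have hT1' : p1'.1 - eps.1 ≠ 0 := by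
    intro h
    apply hea'
    have h2 : p1'.2 - eps.2 = 0 := by rw [m1', h]; ring
    have : eps = p1' := Prod.ext (by linarith) (by linarith)
    rw [this]; exact hp1'.1
  -- key algebraic relation from the reflection configuration
  have K : (p3.1 - eps.1) * ((v2 - s) * (v3 + s))
      = (p1.1 - eps.1) * ((v1 - s) * (v2 + s)) := by
    linear_combination (v2 + s) * (hseg1 - mq + m1) + (v2 - s) * (hseg2 - m3 + mq)
  have K' : (p3'.1 - eps.1) * ((v2 - s) * (v3 + s))
      = (p1'.1 - eps.1) * ((v1 - s) * (v2 + s)) := by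
    linear_combination (v2 + s) * (hseg1' - mq' + m1') + (v2 - s) * (hseg2' - m3' + mq')
  have hD : (v2 - s) * (v3 + s) ≠ 0 :=
    mul_ne_zero (hne v2 hv2).1 (hne v3 hv3).2
  have hKey : (p3.1 - eps.1) * (p1'.1 - eps.1) = (p3'.1 - eps.1) * (p1.1 - eps.1) := by
    have h0 : ((p3.1 - eps.1) * (p1'.1 - eps.1) - (p3'.1 - eps.1) * (p1.1 - eps.1))
        * ((v2 - s) * (v3 + s)) = 0 := by
      linear_combination (p1'.1 - eps.1) * K - (p1.1 - eps.1) * K'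
    rcases mul_eq_zero.mp h0 with h | h
    · linarith
    · exact absurd h hD
  -- a is non-vertical through two distinct points
  have h31 : p3.1 - p1.1 ≠ 0 := by
    intro h
    have hz : (v1 - v3) * (p1.1 - eps.1) = 0 := by
      linear_combination m3 - m1 - mA + (v3 - va) * h
    rcases mul_eq_zero.mp hz with h' | h'
    · exact hv13 (by linarith)
    · exact hT1 h'
  -- slopes are equal
  have hA : v3 * (p3.1 - eps.1) - v1 * (p1.1 - eps.1)
      = va * ((p3.1 - eps.1) - (p1.1 - eps.1)) := by
    linear_combination m1 - m3 + mA
  have hA' : v3 * (p3'.1 - eps.1) - v1 * (p1'.1 - eps.1)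
      = va' * ((p3'.1 - eps.1) - (p1'.1 - eps.1)) := by
    linear_combination m1' - m3' + mA'
  have hc : va * ((p3.1 - p1.1) * (p1'.1 - eps.1))
      = va' * ((p3.1 - p1.1) * (p1'.1 - eps.1)) := by
    linear_combination (-(p1'.1 - eps.1)) * hA + (p1.1 - eps.1) * hA' + (v3 - va') * hKey
  have hEq : va = va' :=
    mul_right_cancel₀ (mul_ne_zero h31 hT1') hc
  -- conclude parallelism
  refine ⟨(p1'.1 - p1.1, p1'.2 - p1.2), ?_⟩
  rw [ha'e, hae, ← hEq]
  ext x
  simp only [Set.mem_setOf_eq, Set.mem_image, Prod.ext_iff, Prod.fst_add, Prod.snd_add]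
  constructor
  · intro hx
    refine ⟨(x.1 - (p1'.1 - p1.1), x.2 - (p1'.2 - p1.2)), ?_, by dsimp only; ring,
      by dsimp only; ring⟩
    dsimp only
    linear_combination hx
  · rintro ⟨y, hy, h1, h2⟩
    linear_combination hy - h2 + va * h1
end
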